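/- Let d ≥ 1, K > 0, k₁ > 0, x₀ ∈ ℝ^d and let p ≥ 2 be a real number. There exist constants α_p ≥ 0 and β_p ≥ 0, depending only on p, K, k₁, ‖x₀‖ and on the values ‖b(x₀)‖ and ‖σ(x₀)‖, such that: whenever b : ℝ^d → ℝ^d satisfies ⟨b(y) − b(x), y − x⟩ ≤ −K‖y − x‖² for all x, y; f : ℝ^d → ℝ^d satisfies ‖f(x)‖ ≤ k₁(1 + ‖x‖) for all x; σ : ℝ^d → M_{d×d}(ℝ) is k₁-Lipschitz in the Frobenius norm; and φ : ℝ^d → ℝ is any function with 0 ≤ φ(x) ≤ 1 for all x, then for every x ∈ ℝ^d with x ≠ x₀, p‖x − x₀‖^{p−2}⟨x − x₀, φ(x)b(x) + f(x)⟩ + (p/2)‖x − x₀‖^{p−2}‖σ(x)‖² + (p(p−2)/2)‖x − x₀‖^{p−4}‖σ(x)ᵀ(x − x₀)‖² ≤ α_p‖x − x₀‖^p + β_p‖x − x₀‖^{p−2}. In particular the constants do not depend on the cutoff function φ. -/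

import Mathlib

open scoped RealInnerProductSpace

/-- The Frobenius norm of a real `d × d` matrix. -/
noncomputable def frobNorm {d : ℕ} (A : Matrix (Fin d) (Fin d) ℝ) : ℝ :=
  Real.sqrt (∑ i, ∑ j, (A i j) ^ 2)

/-- The Euclidean norm of a vector given as a plain function `Fin d → ℝ`. -/
noncomputable def eucNorm {d : ℕ} (v : Fin d → ℝ) : ℝ :=
  Real.sqrt (∑ i, (v i) ^ 2)

lemma frobNorm_nonneg {d : ℕ} (A : Matrix (Fin d) (Fin d) ℝ) : 0 ≤ frobNorm A :=
  Real.sqrt_nonneg _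

lemma frobNorm_sq {d : ℕ} (A : Matrix (Fin d) (Fin d) ℝ) :
    frobNorm A ^ 2 = ∑ i, ∑ j, (A i j) ^ 2 := by
  unfold frobNorm
  rw [Real.sq_sqrt (by positivity)]

lemma eucNorm_sq {d : ℕ} (v : Fin d → ℝ) :
    eucNorm v ^ 2 = ∑ i, (v i) ^ 2 := by
  unfold eucNorm
  rw [Real.sq_sqrt (by positivity)]

lemma frobNorm_eq_norm {d : ℕ} (A : Matrix (Fin d) (Fin d) ℝ) :
    frobNorm A = ‖(WithLp.equiv 2 (Fin d × Fin d → ℝ)).symm (fun ij => A ij.1 ij.2)‖ := by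
  rw [EuclideanSpace.norm_eq]
  unfold frobNorm
  congr 1
  rw [Fintype.sum_prod_type]
  simp [Real.norm_eq_abs, sq_abs, WithLp.equiv_symm_apply, PiLp.toLp_apply]

lemma frobNorm_le_sub_add {d : ℕ} (A B : Matrix (Fin d) (Fin d) ℝ) :
    frobNorm A ≤ frobNorm (A - B) + frobNorm B := by
  rw [frobNorm_eq_norm, frobNorm_eq_norm, frobNorm_eq_norm]
  have h : (fun ij : Fin d × Fin d => (A - B) ij.1 ij.2)
      = (fun ij : Fin d × Fin d => A ij.1 ij.2) - fun ij : Fin d × Fin d => B ij.1 ij.2 := by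
    funext ij; simp [Matrix.sub_apply]
  rw [h, WithLp.equiv_symm_apply, WithLp.toLp_sub]
  have := norm_add_le ((WithLp.equiv 2 (Fin d × Fin d → ℝ)).symm (fun ij => A ij.1 ij.2)
      - (WithLp.equiv 2 (Fin d × Fin d → ℝ)).symm (fun ij => B ij.1 ij.2))
    ((WithLp.equiv 2 (Fin d × Fin d → ℝ)).symm (fun ij => B ij.1 ij.2))
  simpa using this

/-- `‖Aᵀ v‖² ≤ frob(A)² ‖v‖²` (sum form). -/
lemma mulVec_sq_le {d : ℕ} (A : Matrix (Fin d) (Fin d) ℝ) (v : Fin d → ℝ) :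
    eucNorm (A.transpose.mulVec v) ^ 2 ≤ frobNorm A ^ 2 * (∑ j, (v j) ^ 2) := by
  rw [eucNorm_sq, frobNorm_sq]
  calc ∑ i, (A.transpose.mulVec v i) ^ 2
      ≤ ∑ i, (∑ j, (A j i) ^ 2) * (∑ j, (v j) ^ 2) := by
        apply Finset.sum_le_sum
        intro i _
        have : A.transpose.mulVec v i = ∑ j, A j i * v j := by
          simp [Matrix.mulVec, Matrix.transpose_apply, dotProduct]
        rw [this]
        exact Finset.sum_mul_sq_le_sq_mul_sq _ _ _
    _ = (∑ i, ∑ j, (A i j) ^ 2) * (∑ j, (v j) ^ 2) := by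
        rw [← Finset.sum_mul, Finset.sum_comm]

theorem stmt4 {d : ℕ} (hd : 1 ≤ d) (K k₁ p : ℝ) (hK : 0 < K) (hk₁ : 0 < k₁)
    (hp : 2 ≤ p) (x₀ : EuclideanSpace ℝ (Fin d)) (Cb Cσ : ℝ) :
    ∃ αp βp : ℝ, 0 ≤ αp ∧ 0 ≤ βp ∧
      ∀ (b f : EuclideanSpace ℝ (Fin d) → EuclideanSpace ℝ (Fin d))
        (σ : EuclideanSpace ℝ (Fin d) → Matrix (Fin d) (Fin d) ℝ)
        (φ : EuclideanSpace ℝ (Fin d) → ℝ),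
        ‖b x₀‖ = Cb → frobNorm (σ x₀) = Cσ →
        (∀ x y, ⟪b y - b x, y - x⟫ ≤ -K * ‖y - x‖ ^ 2) →
        (∀ x, ‖f x‖ ≤ k₁ * (1 + ‖x‖)) →
        (∀ x y, frobNorm (σ x - σ y) ≤ k₁ * ‖x - y‖) →
        (∀ x, 0 ≤ φ x ∧ φ x ≤ 1) →
        ∀ x : EuclideanSpace ℝ (Fin d), x ≠ x₀ →
          p * ‖x - x₀‖ ^ (p - 2) * ⟪x - x₀, φ x • b x + f x⟫
            + (p / 2) * ‖x - x₀‖ ^ (p - 2) * frobNorm (σ x) ^ 2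
            + (p * (p - 2) / 2) * ‖x - x₀‖ ^ (p - 4)
              * eucNorm ((σ x).transpose.mulVec (WithLp.equiv 2 (Fin d → ℝ) (x - x₀))) ^ 2
          ≤ αp * ‖x - x₀‖ ^ p + βp * ‖x - x₀‖ ^ (p - 2) := by
  set M1 : ℝ := |Cb| + k₁ * (1 + ‖x₀‖) with hM1def
  have hM1 : 0 ≤ M1 := by positivity
  have ha1 : (0:ℝ) ≤ p * M1 := mul_nonneg (by linarith) hM1
  have ha2 : (0:ℝ) ≤ p * k₁ := mul_nonneg (by linarith) hk₁.le
  have ha3 : (0:ℝ) ≤ p * (p - 1) := mul_nonneg (by linarith) (by linarith)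
  refine ⟨p * M1 + p * k₁ + p * (p - 1) * k₁ ^ 2,
          p * M1 + p * (p - 1) * Cσ ^ 2,
          add_nonneg (add_nonneg ha1 ha2) (mul_nonneg ha3 (sq_nonneg _)),
          add_nonneg ha1 (mul_nonneg ha3 (sq_nonneg _)), ?_⟩
  intro b f σ φ hCb hCσ hb hf hσ hφ x hx
  set r : ℝ := ‖x - x₀‖ with hrdef
  have hr : 0 < r := by
    simpa [hrdef] using norm_pos_iff.2 (sub_ne_zero.2 hx)
  -- inner product bound
  have hinner : ⟪x - x₀, φ x • b x + f x⟫ ≤ M1 * r + k₁ * r ^ 2 := by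
    have h1 : ⟪x - x₀, b x⟫ ≤ |Cb| * r := by
      have hsplit : ⟪x - x₀, b x⟫ = ⟪b x - b x₀, x - x₀⟫ + ⟪x - x₀, b x₀⟫ := by
        rw [real_inner_comm (x - x₀) (b x - b x₀)]
        rw [← inner_add_right]
        congr 1
        abel
      have h2 := hb x₀ x
      have h3 : ⟪x - x₀, b x₀⟫ ≤ |Cb| * r := by
        calc ⟪x - x₀, b x₀⟫ ≤ ‖x - x₀‖ * ‖b x₀‖ := real_inner_le_norm _ _
          _ = Cb * r := by rw [hCb]; ring
          _ ≤ |Cb| * r := by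
              have := le_abs_self Cb
              nlinarith
      nlinarith [sq_nonneg r]
    have hφx := hφ x
    have h4 : φ x * ⟪x - x₀, b x⟫ ≤ |Cb| * r := by
      have habs : (0:ℝ) ≤ |Cb| * r := by positivity
      nlinarith
    have h5 : ⟪x - x₀, f x⟫ ≤ k₁ * (1 + ‖x₀‖) * r + k₁ * r ^ 2 := by
      have hx' : ‖x‖ ≤ ‖x₀‖ + r := by
        have : x = (x - x₀) + x₀ := by abel
        calc ‖x‖ = ‖(x - x₀) + x₀‖ := by rw [← this]
          _ ≤ ‖x - x₀‖ + ‖x₀‖ := norm_add_le _ _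
          _ = ‖x₀‖ + r := by rw [hrdef]; ring
      calc ⟪x - x₀, f x⟫ ≤ ‖x - x₀‖ * ‖f x‖ := real_inner_le_norm _ _
        _ = r * ‖f x‖ := by rw [hrdef]
        _ ≤ r * (k₁ * (1 + ‖x‖)) := by
            exact mul_le_mul_of_nonneg_left (hf x) hr.le
        _ ≤ r * (k₁ * (1 + (‖x₀‖ + r))) := by
            have : k₁ * (1 + ‖x‖) ≤ k₁ * (1 + (‖x₀‖ + r)) := by nlinarith
            exact mul_le_mul_of_nonneg_left this hr.le
        _ = k₁ * (1 + ‖x₀‖) * r + k₁ * r ^ 2 := by ring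
    calc ⟪x - x₀, φ x • b x + f x⟫
        = φ x * ⟪x - x₀, b x⟫ + ⟪x - x₀, f x⟫ := by
          rw [inner_add_right, real_inner_smul_right]
      _ ≤ |Cb| * r + (k₁ * (1 + ‖x₀‖) * r + k₁ * r ^ 2) := by linarith
      _ = M1 * r + k₁ * r ^ 2 := by rw [hM1def]; ring
  -- Frobenius bound
  have hfrob : frobNorm (σ x) ^ 2 ≤ 2 * Cσ ^ 2 + 2 * k₁ ^ 2 * r ^ 2 := by
    have h1 : frobNorm (σ x) ≤ k₁ * r + Cσ := by
      calc frobNorm (σ x) ≤ frobNorm (σ x - σ x₀) + frobNorm (σ x₀) :=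
            frobNorm_le_sub_add _ _
        _ ≤ k₁ * ‖x - x₀‖ + Cσ := by rw [hCσ]; exact add_le_add_left (hσ x x₀) _
        _ = k₁ * r + Cσ := by rw [hrdef]
    have h0 := frobNorm_nonneg (σ x)
    nlinarith [sq_nonneg (k₁ * r - Cσ)]
  -- vector norm relation
  have hvsum : (∑ j, ((WithLp.equiv 2 (Fin d → ℝ)) (x - x₀) j) ^ 2) = r ^ 2 := by
    rw [hrdef, EuclideanSpace.norm_eq, Real.sq_sqrt (by positivity)]
    apply Finset.sum_congr rfl
    intro j _
    simp [Real.norm_eq_abs, sq_abs]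
  have heuc : eucNorm ((σ x).transpose.mulVec (WithLp.equiv 2 (Fin d → ℝ) (x - x₀))) ^ 2
      ≤ (2 * Cσ ^ 2 + 2 * k₁ ^ 2 * r ^ 2) * r ^ 2 := by
    calc eucNorm ((σ x).transpose.mulVec (WithLp.equiv 2 (Fin d → ℝ) (x - x₀))) ^ 2
        ≤ frobNorm (σ x) ^ 2 * (∑ j, ((WithLp.equiv 2 (Fin d → ℝ)) (x - x₀) j) ^ 2) :=
          mulVec_sq_le _ _
      _ = frobNorm (σ x) ^ 2 * r ^ 2 := by rw [hvsum]
      _ ≤ (2 * Cσ ^ 2 + 2 * k₁ ^ 2 * r ^ 2) * r ^ 2 := by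
          have := sq_nonneg r
          nlinarith
  -- rpow facts
  have he2 : 0 ≤ r ^ (p - 2) := Real.rpow_nonneg hr.le _
  have he4 : 0 ≤ r ^ (p - 4) := Real.rpow_nonneg hr.le _
  have hr2 : (r:ℝ) ^ (2:ℕ) = r ^ (2:ℝ) := by
    rw [← Real.rpow_natCast r 2]; norm_num
  have hmul2 : r ^ (p - 2) * r ^ (2:ℕ) = r ^ p := by
    rw [hr2, ← Real.rpow_add hr]; norm_num
  have hmul4 : r ^ (p - 4) * r ^ (2:ℕ) = r ^ (p - 2) := by
    rw [hr2, ← Real.rpow_add hr]; congr 1; ring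
  have hmulr : r ^ (p - 2) * r ≤ r ^ p + r ^ (p - 2) := by
    have h1 : r ^ (p - 2) * r = r ^ (p - 1) := by
      nth_rewrite 2 [← Real.rpow_one r]
      rw [← Real.rpow_add hr]; congr 1; ring
    rw [h1]
    rcases le_or_gt r 1 with h | h
    · have : r ^ (p - 1) ≤ r ^ (p - 2) :=
        Real.rpow_le_rpow_of_exponent_ge hr h (by linarith)
      have : (0:ℝ) ≤ r ^ p := Real.rpow_nonneg hr.le _
      linarith [Real.rpow_le_rpow_of_exponent_ge hr h (show p - 2 ≤ p - 1 by linarith)]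
    · have : r ^ (p - 1) ≤ r ^ p :=
        Real.rpow_le_rpow_of_exponent_le h.le (by linarith)
      linarith
  -- combine
  have hp0 : (0:ℝ) < p := by linarith
  have hp2 : (0:ℝ) ≤ p - 2 := by linarith
  set e2 := r ^ (p - 2)
  set e4 := r ^ (p - 4)
  set ep := r ^ p
  have t1 : p * e2 * ⟪x - x₀, φ x • b x + f x⟫ ≤ p * M1 * (ep + e2) + p * k₁ * ep := by
    have s1 : p * e2 * ⟪x - x₀, φ x • b x + f x⟫ ≤ p * e2 * (M1 * r + k₁ * r ^ 2) :=
      mul_le_mul_of_nonneg_left hinner (by positivity)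
    have s2 : p * e2 * (M1 * r + k₁ * r ^ 2) = p * M1 * (e2 * r) + p * k₁ * (e2 * r ^ 2) := by
      ring
    have s3 : e2 * r ^ 2 = ep := hmul2
    have s4 : p * M1 * (e2 * r) ≤ p * M1 * (ep + e2) :=
      mul_le_mul_of_nonneg_left hmulr (by positivity)
    rw [s2, s3] at s1
    linarith
  have t2 : (p / 2) * e2 * frobNorm (σ x) ^ 2 ≤ p * Cσ ^ 2 * e2 + p * k₁ ^ 2 * ep := by
    have s1 : (p / 2) * e2 * frobNorm (σ x) ^ 2
        ≤ (p / 2) * e2 * (2 * Cσ ^ 2 + 2 * k₁ ^ 2 * r ^ 2) :=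
      mul_le_mul_of_nonneg_left hfrob (by positivity)
    have s2 : (p / 2) * e2 * (2 * Cσ ^ 2 + 2 * k₁ ^ 2 * r ^ 2)
        = p * Cσ ^ 2 * e2 + p * k₁ ^ 2 * (e2 * r ^ 2) := by ring
    rw [s2, hmul2] at s1
    exact s1
  have t3 : (p * (p - 2) / 2) * e4
        * eucNorm ((σ x).transpose.mulVec (WithLp.equiv 2 (Fin d → ℝ) (x - x₀))) ^ 2
      ≤ p * (p - 2) * Cσ ^ 2 * e2 + p * (p - 2) * k₁ ^ 2 * ep := by
    have s1 := mul_le_mul_of_nonneg_left heuc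
      (show (0:ℝ) ≤ (p * (p - 2) / 2) * e4 by positivity)
    have s2 : (p * (p - 2) / 2) * e4 * ((2 * Cσ ^ 2 + 2 * k₁ ^ 2 * r ^ 2) * r ^ 2)
        = p * (p - 2) * Cσ ^ 2 * (e4 * r ^ 2)
          + p * (p - 2) * k₁ ^ 2 * ((e4 * r ^ 2) * r ^ 2) := by ring
    rw [s2, hmul4, hmul2] at s1
    linarith
  calc p * e2 * ⟪x - x₀, φ x • b x + f x⟫ + (p / 2) * e2 * frobNorm (σ x) ^ 2
        + (p * (p - 2) / 2) * e4
          * eucNorm ((σ x).transpose.mulVec (WithLp.equiv 2 (Fin d → ℝ) (x - x₀))) ^ 2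
      ≤ (p * M1 * (ep + e2) + p * k₁ * ep) + (p * Cσ ^ 2 * e2 + p * k₁ ^ 2 * ep)
        + (p * (p - 2) * Cσ ^ 2 * e2 + p * (p - 2) * k₁ ^ 2 * ep) :=
        add_le_add (add_le_add t1 t2) t3
    _ = (p * M1 + p * k₁ + p * (p - 1) * k₁ ^ 2) * ep
        + (p * M1 + p * (p - 1) * Cσ ^ 2) * e2 := by ring
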